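/- Let c, t, e, β be positive reals with e ≤ c. Then e/(c + t/(1+β)) − e/(c + t) < β/2. -/

import Mathlib

theorem mnl_upper_error_bound (c t e β : ℝ) (hc : 0 < c) (ht : 0 < t) (he : 0 < e)
    (hβ : 0 < β) (hec : e ≤ c) :
    e / (c + t / (1 + β)) - e / (c + t) < β / 2 := by
  have h1 : (0:ℝ) < 1 + β := by linarith
  have hA : 0 < c + t / (1 + β) := by positivity
  have hB : 0 < c + t := by linarith
  rw [sub_lt_iff_lt_add, div_lt_iff₀ hA]
  have key : e * t * β * 2 < (c * (1 + β) + t) * (c + t) * β := by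
    nlinarith [mul_nonneg (sq_nonneg (c - t)) hβ.le, mul_pos (mul_pos hc ht) hβ,
      mul_pos (mul_pos hc hβ) (mul_pos hβ hB),
      mul_le_mul_of_nonneg_right hec (mul_pos ht hβ).le]
  rw [show c + t / (1 + β) = (c * (1 + β) + t) / (1 + β) from by field_simp]
  have expand : (β / 2 + e / (c + t)) * ((c * (1 + β) + t) / (1 + β)) =
      (β * (c + t) * (c * (1 + β) + t) + 2 * e * (c * (1 + β) + t)) / (2 * (c + t) * (1 + β)) := by
    field_simp
  rw [expand, lt_div_iff₀ (by positivity)]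
  nlinarith [key, mul_pos (mul_pos he hc) hβ]
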